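/- arXiv:1911.02306 — 4 statements merged into one kernel-verified Lean document; each statement's English description precedes it below -/
import Mathlib

section
/- Suppose β ∈ ℝᵖ, β₀ ∈ ℝ, ξ, ξ*, α, α* ∈ ℝⁿ, and ε ∈ ℝ satisfy the KKT complementary slackness conditions: for all i, α_i(Xᵢ:ᵀβ + β₀ − yᵢ − ε − ξᵢ) = 0 and α*_i(yᵢ − Xᵢ:ᵀβ − β₀ − ε − ξ*ᵢ) = 0, with ξᵢ ≥ 0, ξ*ᵢ ≥ 0, α_i ≥ 0, α*_i ≥ 0, and (Cν − Σᵢ(α_i + α*_i))·ε = 0. If ε > 0, then α_i · α*_i = 0 for all i, and Σᵢ(α_i + α*_i) = Cν. -/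
open Matrix BigOperators

/-- under the KKT complementary slackness conditions, if ε > 0 then
αᵢ α*ᵢ = 0 for all i and Σᵢ (αᵢ + α*ᵢ) = Cν. -/
theorem stmt2 (n p : ℕ) (X : Matrix (Fin n) (Fin p) ℝ) (y : Fin n → ℝ)
    (C ν : ℝ) (hC : 0 < C) (hν : ν ∈ Set.Ioc (0 : ℝ) 1)
    (β : Fin p → ℝ) (β₀ : ℝ) (ξ ξs α αs : Fin n → ℝ) (ε : ℝ)
    (h1 : ∀ i, α i * (X i ⬝ᵥ β + β₀ - y i - ε - ξ i) = 0)
    (h2 : ∀ i, αs i * (y i - X i ⬝ᵥ β - β₀ - ε - ξs i) = 0)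
    (hξ : ∀ i, 0 ≤ ξ i) (hξs : ∀ i, 0 ≤ ξs i)
    (hα : ∀ i, 0 ≤ α i) (hαs : ∀ i, 0 ≤ αs i)
    (hcs : (C * ν - ∑ i, (α i + αs i)) * ε = 0)
    (hε : 0 < ε) :
    (∀ i, α i * αs i = 0) ∧ ∑ i, (α i + αs i) = C * ν := by
  constructor
  · intro i
    by_contra h
    have hαi : α i ≠ 0 := fun h0 => h (by rw [h0]; ring)
    have hαsi : αs i ≠ 0 := fun h0 => h (by rw [h0]; ring)
    have e1 : X i ⬝ᵥ β + β₀ - y i - ε - ξ i = 0 :=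
      (mul_eq_zero.mp (h1 i)).resolve_left hαi
    have e2 : y i - X i ⬝ᵥ β - β₀ - ε - ξs i = 0 :=
      (mul_eq_zero.mp (h2 i)).resolve_left hαsi
    have := hξ i; have := hξs i
    linarith
  · have := mul_eq_zero.mp hcs
    rcases this with h | h
    · linarith
    · exact absurd h (ne_of_gt hε)
end

section
/- Let Q̄_{ii} > 0, suppose 0 ≤ θ_i ≤ ∇_i f(θ)/Q̄_{ii}, and let θ' be equal to θ except that its i-th coordinate is set to 0 (the clipped single-coordinate update to the boundary). Then f(θ) − f(θ') ≥ ½ Q̄_{ii} θ_i² ≥ 0. -/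
open Matrix

/-- The quadratic f(θ) = ½ θᵀ Q̄ θ + lᵀ θ. -/
noncomputable def fq {N : ℕ} (Q : Matrix (Fin N) (Fin N) ℝ) (l θ : Fin N → ℝ) : ℝ :=
  (1 / 2) * (θ ⬝ᵥ (Q *ᵥ θ)) + l ⬝ᵥ θ

/-- The i-th partial derivative of f, ∇f(θ) = Q̄ θ + l. -/
noncomputable def gradq {N : ℕ} (Q : Matrix (Fin N) (Fin N) ℝ) (l θ : Fin N → ℝ)
    (i : Fin N) : ℝ :=
  (Q *ᵥ θ + l) i

/-- the clipped single-coordinate update to the boundary 0 decreases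
f by at least ½ Q̄ᵢᵢ θᵢ². -/
theorem stmt10 {N : ℕ} (Q : Matrix (Fin N) (Fin N) ℝ) (hQ : Q.IsSymm)
    (l θ : Fin N → ℝ) (i : Fin N) (hQii : 0 < Q i i)
    (h0 : 0 ≤ θ i) (h1 : θ i ≤ gradq Q l θ i / Q i i) :
    let θ' := Function.update θ i 0
    (1 / 2) * Q i i * (θ i) ^ 2 ≤ fq Q l θ - fq Q l θ' ∧
      0 ≤ (1 / 2) * Q i i * (θ i) ^ 2 := by
  intro θ'
  set t := θ i with ht
  have hθ : θ = θ' + Pi.single i t := by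
    funext j
    by_cases h : j = i
    · subst h; simp [θ', ht]
    · simp [θ', Function.update_of_ne h, Pi.single_eq_of_ne h]
  have hsym : θ' ⬝ᵥ (Q *ᵥ Pi.single i t) = (Q *ᵥ θ') i * t := by
    rw [dotProduct_mulVec, ← hQ.eq, ← vecMul_transpose, hQ.eq, hQ.eq]
    simp [dotProduct_single]
  have key : fq Q l θ - fq Q l θ' = t * gradq Q l θ i - (1/2) * Q i i * t^2 := by
    have hQθ : (Q *ᵥ θ) i = (Q *ᵥ θ') i + Q i i * t := by
      rw [hθ, mulVec_add, Pi.add_apply, mulVec_single]; simp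
    simp only [fq, gradq, Pi.add_apply]
    nth_rewrite 1 [hθ]
    nth_rewrite 1 [hθ]
    nth_rewrite 1 [hθ]
    rw [mulVec_add, dotProduct_add, add_dotProduct, add_dotProduct, dotProduct_add,
      hsym, single_dotProduct, mulVec_single]
    simp only [single_dotProduct, dotProduct_single, hQθ, Pi.smul_apply, Matrix.col_apply, op_smul_eq_mul]
    ring
  have hgrad : Q i i * t ≤ gradq Q l θ i := by
    have := (le_div_iff₀ hQii).mp h1
    linarith
  constructor
  · have h2 : Q i i * t * t ≤ gradq Q l θ i * t := mul_le_mul_of_nonneg_right hgrad h0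
    nlinarith
  · positivity
end

section
/- Let C > 0, n ≥ 1, let i ≠ j, suppose s := Q̄_{ii} + Q̄_{jj} − 2 Q̄_{ij} > 0 and 0 ≤ θ_i, θ_j ≤ C/n. Set g := ∇_i f(θ) − ∇_j f(θ), I₁ = max(−θ_i, θ_j − C/n), I₂ = min(θ_j, C/n − θ_i), t* = min(max(I₁, −g/s), I₂), and θ' = θ + t*(e_i − e_j). Then 0 ≤ θ'_i, θ'_j ≤ C/n and (i,j) is not a violating pair at θ': it is NOT the case that θ'_i < C/n, θ'_j > 0 and ∇_i f(θ') < ∇_j f(θ'), and it is NOT the case that θ'_i > 0, θ'_j < C/n and ∇_i f(θ') > ∇_j f(θ'). -/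
open Matrix

/-- the clipped SMO pair update keeps both coordinates in [0, C/n]
and after it (i,j) is no longer a violating pair. -/
theorem stmt13 {N : ℕ} (Q : Matrix (Fin N) (Fin N) ℝ) (hQ : Q.IsSymm)
    (l θ : Fin N → ℝ) (i j : Fin N) (hij : i ≠ j)
    (C : ℝ) (hC : 0 < C) (n : ℕ) (hn : 1 ≤ n)
    (hs : 0 < Q i i + Q j j - 2 * Q i j)
    (hθi : θ i ∈ Set.Icc 0 (C / n)) (hθj : θ j ∈ Set.Icc 0 (C / n)) :
    let s := Q i i + Q j j - 2 * Q i j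
    let g := gradq Q l θ i - gradq Q l θ j
    let I₁ := max (-θ i) (θ j - C / n)
    let I₂ := min (θ j) (C / n - θ i)
    let tstar := min (max I₁ (-g / s)) I₂
    let θ' := θ + tstar • (Pi.single i (1 : ℝ) - Pi.single j 1)
    (θ' i ∈ Set.Icc 0 (C / n) ∧ θ' j ∈ Set.Icc 0 (C / n)) ∧
      ¬(θ' i < C / n ∧ 0 < θ' j ∧ gradq Q l θ' i < gradq Q l θ' j) ∧
      ¬(0 < θ' i ∧ θ' j < C / n ∧ gradq Q l θ' j < gradq Q l θ' i) := by
  intro s g I₁ I₂ tstar θ'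
  obtain ⟨hθi0, hθi1⟩ := hθi
  obtain ⟨hθj0, hθj1⟩ := hθj
  have hQji : Q j i = Q i j := by
    have := hQ; rw [Matrix.IsSymm] at this
    have h2 := congrFun (congrFun this i) j
    simpa [Matrix.transpose_apply] using h2
  have hI12 : I₁ ≤ I₂ := by
    apply max_le <;> apply le_min <;> linarith
  have ht2 : tstar ≤ I₂ := min_le_right _ _
  have ht1 : I₁ ≤ tstar := le_min (le_max_left _ _) hI12
  have hti : θ' i = θ i + tstar := by
    simp [θ', Pi.single_apply, hij]
  have htj : θ' j = θ j - tstar := by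
    simp [θ', Pi.single_apply, hij.symm]
    ring
  have ht1a : -θ i ≤ tstar := le_trans (le_max_left _ _) ht1
  have ht1b : θ j - C / n ≤ tstar := le_trans (le_max_right _ _) ht1
  have ht2a : tstar ≤ θ j := le_trans ht2 (min_le_left _ _)
  have ht2b : tstar ≤ C / n - θ i := le_trans ht2 (min_le_right _ _)
  have hbox : (θ' i ∈ Set.Icc 0 (C / n) ∧ θ' j ∈ Set.Icc 0 (C / n)) := by
    rw [hti, htj]
    constructor <;> constructor <;> linarith
  -- gradient difference after update
  have hgi : ∀ k : Fin N, gradq Q l θ' k = gradq Q l θ k + tstar * (Q k i - Q k j) := by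
    intro k
    simp only [gradq, θ', Matrix.mulVec_add, Matrix.mulVec_smul, Matrix.mulVec_sub,
      Matrix.mulVec_single]
    simp [mul_comm]
    ring
  have hgrad : gradq Q l θ' i - gradq Q l θ' j = g + tstar * s := by
    rw [hgi i, hgi j]
    simp only [g, s, gradq]
    rw [hQji]; ring
  refine ⟨hbox, ?_, ?_⟩
  · rintro ⟨h1, h2, h3⟩
    -- g + tstar * s < 0, so tstar < -g/s, forcing tstar = I₂
    have hlt : tstar < -g / s := by
      have hs' : (0:ℝ) < s := hs
      have : g + tstar * s < 0 := by linarith [hgrad]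
      rw [lt_div_iff₀ hs']; linarith
    have hmax : -g / s ≤ max I₁ (-g / s) := le_max_right _ _
    have htI2 : tstar = I₂ := by
      rcases min_choice (max I₁ (-g / s)) I₂ with h | h
      · exfalso; rw [show tstar = min (max I₁ (-g/s)) I₂ from rfl, h] at hlt; linarith
      · exact h
    rcases min_choice (θ j) (C / n - θ i) with h | h
    · have : θ' j = 0 := by rw [htj, htI2, show I₂ = min (θ j) (C/n - θ i) from rfl, h]; ring
      linarith
    · have : θ' i = C / n := by rw [hti, htI2, show I₂ = min (θ j) (C/n - θ i) from rfl, h]; ring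
      linarith
  · rintro ⟨h1, h2, h3⟩
    have hgt : -g / s < tstar := by
      have hs' : (0:ℝ) < s := hs
      have : 0 < g + tstar * s := by linarith [hgrad]
      rw [div_lt_iff₀ hs']; linarith
    have htI1 : tstar = I₁ := by
      have hle : tstar ≤ max I₁ (-g / s) := min_le_left _ _
      rcases max_choice I₁ (-g / s) with h | h
      · rw [h] at hle; linarith
      · exfalso; rw [h] at hle; linarith
    rcases max_choice (-θ i) (θ j - C / n) with h | h
    · have : θ' i = 0 := by rw [hti, htI1, show I₁ = max (-θ i) (θ j - C/n) from rfl, h]; ring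
      linarith
    · have : θ' j = C / n := by rw [htj, htI1, show I₁ = max (-θ i) (θ j - C/n) from rfl, h]; ring
      linarith
end

section
/- Let θ = (α, α*, γ, μ) be dual feasible and let (β°, β₀°, ξ°, ξ*°, ε°) be primal feasible. Then ⟨β(θ), β°⟩ ≥ −γᵀ b + μᵀ d − Σᵢ (α_i − α*_i) yᵢ − ε° C ν − Σᵢ (α_i ξ°ᵢ + α*_i ξ*°ᵢ). -/
open Matrix BigOperators

/-- for any dual feasible (α, α*, γ, μ) and any primal feasible
(β°, β₀°, ξ°, ξ*°, ε°), the inner product ⟨β(θ), β°⟩ is bounded below: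
⟨β(θ), β°⟩ ≥ −γᵀb + μᵀd − Σᵢ(αᵢ − α*ᵢ)yᵢ − ε°Cν − Σᵢ(αᵢξ°ᵢ + α*ᵢξ*°ᵢ). -/
theorem stmt15 (n p k₁ k₂ : ℕ) (X : Matrix (Fin n) (Fin p) ℝ) (y : Fin n → ℝ)
    (A : Matrix (Fin k₁) (Fin p) ℝ) (Γ : Matrix (Fin k₂) (Fin p) ℝ)
    (b : Fin k₁ → ℝ) (d : Fin k₂ → ℝ) (C ν : ℝ)
    (hC : 0 < C) (hν : ν ∈ Set.Ioc (0 : ℝ) 1)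
    (α αs : Fin n → ℝ) (γ : Fin k₁ → ℝ) (μ : Fin k₂ → ℝ)
    (hα : ∀ i, 0 ≤ α i ∧ α i ≤ C / n) (hαs : ∀ i, 0 ≤ αs i ∧ αs i ≤ C / n)
    (hsum : ∑ i, (α i + αs i) ≤ C * ν) (hzero : ∑ i, (α i - αs i) = 0)
    (hγ : ∀ j, 0 ≤ γ j)
    (βopt : Fin p → ℝ) (β₀opt : ℝ) (ξopt ξsopt : Fin n → ℝ) (εopt : ℝ)
    (hp1 : ∀ i, X i ⬝ᵥ βopt + β₀opt - y i ≤ εopt + ξopt i)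
    (hp2 : ∀ i, y i - X i ⬝ᵥ βopt - β₀opt ≤ εopt + ξsopt i)
    (hp3 : ∀ i, 0 ≤ ξopt i) (hp4 : ∀ i, 0 ≤ ξsopt i) (hp5 : 0 ≤ εopt)
    (hp6 : ∀ j, (A *ᵥ βopt) j ≤ b j) (hp7 : Γ *ᵥ βopt = d) :
    (-(Xᵀ *ᵥ (α - αs)) - Aᵀ *ᵥ γ + Γᵀ *ᵥ μ) ⬝ᵥ βopt ≥
      -(γ ⬝ᵥ b) + μ ⬝ᵥ d - (∑ i, (α i - αs i) * y i) - εopt * C * ν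
        - ∑ i, (α i * ξopt i + αs i * ξsopt i) := by
  have h1 : (Xᵀ *ᵥ (α - αs)) ⬝ᵥ βopt = (α - αs) ⬝ᵥ (X *ᵥ βopt) := by
    rw [Matrix.mulVec_transpose, ← Matrix.dotProduct_mulVec]
  have h2 : (Aᵀ *ᵥ γ) ⬝ᵥ βopt = γ ⬝ᵥ (A *ᵥ βopt) := by
    rw [Matrix.mulVec_transpose, ← Matrix.dotProduct_mulVec]
  have h3 : (Γᵀ *ᵥ μ) ⬝ᵥ βopt = μ ⬝ᵥ (Γ *ᵥ βopt) := by
    rw [Matrix.mulVec_transpose, ← Matrix.dotProduct_mulVec]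
  have hA : γ ⬝ᵥ (A *ᵥ βopt) ≤ γ ⬝ᵥ b :=
    Finset.sum_le_sum fun j _ => mul_le_mul_of_nonneg_left (hp6 j) (hγ j)
  have hterm : ∀ i ∈ Finset.univ, (α i - αs i) * ((X *ᵥ βopt) i + β₀opt) ≤
      (α i - αs i) * y i + εopt * (α i + αs i) + (α i * ξopt i + αs i * ξsopt i) := by
    intro i _
    have e1 := hp1 i
    have e2 := hp2 i
    have hXi : (X *ᵥ βopt) i = X i ⬝ᵥ βopt := rfl
    rw [hXi]
    nlinarith [mul_nonneg (hα i).1 (sub_nonneg.2 e1),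
      mul_nonneg (hαs i).1 (sub_nonneg.2 e2)]
  have hz : ∑ i, (α i - αs i) * β₀opt = 0 := by
    rw [← Finset.sum_mul, hzero, zero_mul]
  have hsumX := Finset.sum_le_sum hterm
  have hL : ∑ i, (α i - αs i) * ((X *ᵥ βopt) i + β₀opt)
      = (α - αs) ⬝ᵥ (X *ᵥ βopt) + ∑ i, (α i - αs i) * β₀opt := by
    simp only [dotProduct, Pi.sub_apply, mul_add, Finset.sum_add_distrib]
  have hR : ∑ i, ((α i - αs i) * y i + εopt * (α i + αs i) + (α i * ξopt i + αs i * ξsopt i))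
      = (∑ i, (α i - αs i) * y i) + εopt * (∑ i, (α i + αs i))
        + ∑ i, (α i * ξopt i + αs i * ξsopt i) := by
    rw [Finset.sum_add_distrib, Finset.sum_add_distrib, Finset.mul_sum]
  have hε : εopt * (∑ i, (α i + αs i)) ≤ εopt * C * ν := by
    rw [mul_assoc]
    exact mul_le_mul_of_nonneg_left hsum hp5
  have hgoal : (-(Xᵀ *ᵥ (α - αs)) - Aᵀ *ᵥ γ + Γᵀ *ᵥ μ) ⬝ᵥ βopt
      = -((Xᵀ *ᵥ (α - αs)) ⬝ᵥ βopt) - (Aᵀ *ᵥ γ) ⬝ᵥ βopt + (Γᵀ *ᵥ μ) ⬝ᵥ βopt := by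
    rw [add_dotProduct, sub_dotProduct, neg_dotProduct]
  rw [ge_iff_le, hgoal, h1, h2, h3, hp7]
  rw [hL, hz, add_zero, hR] at hsumX
  linarith
end
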